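/- For α > 0, t > 0, n ∈ ℕ: (1/Γ(α)²) [ 2 ∫₀ᵗ ∫₀^s (t−s)^{α−1}(t−w)^{α−1} (n w/t + n(n−1) w s/t²) dw ds ] = 2 n t^{2α} Γ(2α) / (α Γ(α)² Γ(2α+2)) + n(n−1) t^{2α}/Γ(α+2)². Probabilistically, E{ [𝒩^α(t)]² | N(t)=n } equals the right-hand side, where 𝒩^α(t) = (1/Γ(α)) ∫₀ᵗ (t−s)^{α−1} N(s) ds. -/

import Mathlib

open MeasureTheory Real

/-- Beta-type integrals: `∫₀ᵗ u^p = t^(p+1)/(p+1)` for `p > -1`. -/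
lemma aux_rpow_int (t p : ℝ) (hp : -1 < p) :
    ∫ u in (0:ℝ)..t, u ^ p = t ^ (p + 1) / (p + 1) := by
  rw [integral_rpow (Or.inl hp), Real.zero_rpow (by linarith)]
  ring

lemma aux_outer (α t : ℝ) (hα : 0 < α) (c1 c2 c3 c4 c5 : ℝ) :
    (∫ u in (0:ℝ)..t, (c1 * u ^ (α - 1) + c2 * u ^ α + c3 * u ^ (2*α - 1)
        + c4 * u ^ (2*α) + c5 * u ^ (2*α + 1)))
      = c1 * t ^ α / α + c2 * t ^ (α + 1) / (α + 1) + c3 * t ^ (2*α) / (2*α)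
        + c4 * t ^ (2*α + 1) / (2*α + 1) + c5 * t ^ (2*α + 2) / (2*α + 2) := by
  have J : ∀ (c p : ℝ), -1 < p →
      IntervalIntegrable (fun u : ℝ => c * u ^ p) volume 0 t := fun c p hp =>
    (intervalIntegral.intervalIntegrable_rpow' hp).const_mul c
  have h1 : (-1:ℝ) < α - 1 := by linarith
  have h2 : (-1:ℝ) < α := by linarith
  have h3 : (-1:ℝ) < 2*α - 1 := by linarith
  have h4 : (-1:ℝ) < 2*α := by linarith
  have h5 : (-1:ℝ) < 2*α + 1 := by linarith
  rw [intervalIntegral.integral_add ((((J c1 _ h1).add (J c2 _ h2)).add (J c3 _ h3)).add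
        (J c4 _ h4)) (J c5 _ h5),
      intervalIntegral.integral_add (((J c1 _ h1).add (J c2 _ h2)).add (J c3 _ h3)) (J c4 _ h4),
      intervalIntegral.integral_add ((J c1 _ h1).add (J c2 _ h2)) (J c3 _ h3),
      intervalIntegral.integral_add (J c1 _ h1) (J c2 _ h2)]
  rw [intervalIntegral.integral_const_mul, intervalIntegral.integral_const_mul,
      intervalIntegral.integral_const_mul, intervalIntegral.integral_const_mul,
      intervalIntegral.integral_const_mul]
  rw [aux_rpow_int t _ h1, aux_rpow_int t _ h2, aux_rpow_int t _ h3, aux_rpow_int t _ h4,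
      aux_rpow_int t _ h5]
  rw [show α - 1 + 1 = α by ring, show 2*α - 1 + 1 = 2*α by ring,
      show 2*α + 1 + 1 = 2*α + 2 by ring]
  ring

/-- Inner integral: `∫₀ˢ (t-w)^(α-1) w dw` for `0 ≤ s < t`. -/
lemma aux_inner (α t : ℝ) (hα : 0 < α) (s : ℝ) (hs0 : 0 ≤ s) (hst : s < t) :
    (∫ w in (0:ℝ)..s, (t - w) ^ (α - 1) * w)
      = t ^ (α + 1) / (α * (α + 1)) - t * (t - s) ^ α / α + (t - s) ^ (α + 1) / (α + 1) := by
  have hα1 : (0:ℝ) < α + 1 := by linarith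
  have hderiv : ∀ w ∈ Set.uIcc (0:ℝ) s,
      HasDerivAt (fun w => -(t * (t - w) ^ α) / α + (t - w) ^ (α + 1) / (α + 1))
        ((t - w) ^ (α - 1) * w) w := by
    intro w hw
    rw [Set.uIcc_of_le hs0] at hw
    have hw1 : 0 < t - w := by linarith [hw.2]
    have h1 : HasDerivAt (fun w : ℝ => t - w) (-1) w := (hasDerivAt_id w).const_sub t
    have h2 : HasDerivAt (fun w : ℝ => (t - w) ^ α) (-1 * α * (t - w) ^ (α - 1)) w :=
      h1.rpow_const (Or.inl hw1.ne')
    have h3 : HasDerivAt (fun w : ℝ => (t - w) ^ (α + 1)) (-1 * (α + 1) * (t - w) ^ (α + 1 - 1)) w :=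
      h1.rpow_const (Or.inl hw1.ne')
    have := (((h2.const_mul t).neg).div_const α).add (h3.div_const (α + 1))
    convert this using 1
    pick_goal 4
    have hrw : (t - w) ^ α = (t - w) ^ (α - 1) * (t - w) := by
      rw [← Real.rpow_add_one hw1.ne' (α - 1)]; ring_nf
    rw [show α + 1 - 1 = α by ring, hrw]
    field_simp
    ring
    · rfl
    · rfl
    · rfl
  have hint : IntervalIntegrable (fun w => (t - w) ^ (α - 1) * w) volume 0 s := by
    apply ContinuousOn.intervalIntegrable
    apply ContinuousOn.mul _ continuousOn_id
    apply ContinuousOn.rpow_const ((continuous_const.sub continuous_id).continuousOn)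
    intro w hw
    rw [Set.uIcc_of_le hs0] at hw
    exact Or.inl (by simp only [Pi.sub_apply, id_eq]; intro h; nlinarith [hw.2])
  rw [intervalIntegral.integral_eq_sub_of_hasDerivAt hderiv hint]
  have ht0 : (0:ℝ) < t := lt_of_le_of_lt hs0 hst
  simp only [sub_zero]
  rw [Real.rpow_add_one ht0.ne' α]
  field_simp
  ring

theorem frac_integral_conditional_second_moment (α t : ℝ) (hα : 0 < α) (ht : 0 < t) (n : ℕ) :
    (1 / Real.Gamma α ^ 2) *
        (2 * ∫ s in (0:ℝ)..t, ∫ w in (0:ℝ)..s,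
          (t - s) ^ (α - 1) * (t - w) ^ (α - 1) *
            ((n : ℝ) * w / t + (n : ℝ) * ((n : ℝ) - 1) * w * s / t ^ 2))
      = 2 * (n : ℝ) * t ^ (2 * α) * Real.Gamma (2 * α) /
          (α * Real.Gamma α ^ 2 * Real.Gamma (2 * α + 2)) +
        (n : ℝ) * ((n : ℝ) - 1) * t ^ (2 * α) / Real.Gamma (α + 2) ^ 2 := by
  have hα1 : (0:ℝ) < α + 1 := by linarith
  have hΓα : 0 < Real.Gamma α := Real.Gamma_pos_of_pos hα
  have hΓ2α : 0 < Real.Gamma (2*α) := Real.Gamma_pos_of_pos (by linarith)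
  set N : ℝ := (n : ℝ)
  -- coefficients
  set K : ℝ := N ^ 2 / t with hK
  set B : ℝ := N * (N - 1) / t ^ 2 with hB
  set C : ℝ := t ^ (α + 1) / (α * (α + 1)) with hC
  set D : ℝ := t / α with hD
  set E : ℝ := 1 / (α + 1) with hE
  set g : ℝ → ℝ := fun u => u ^ (α - 1) * (K - B * u) * (C - D * u ^ α + E * u ^ (α + 1))
    with hg
  -- Step 1 : outer integrand equals g (t - s) a.e.
  have hne : ∀ᵐ x : ℝ, x ≠ t := by
    have : (volume : Measure ℝ) {t} = 0 := measure_singleton t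
    filter_upwards [compl_mem_ae_iff.mpr this] with x hx
    simpa using hx
  have step1 : (∫ s in (0:ℝ)..t, ∫ w in (0:ℝ)..s,
        (t - s) ^ (α - 1) * (t - w) ^ (α - 1) *
          (N * w / t + N * (N - 1) * w * s / t ^ 2))
      = ∫ s in (0:ℝ)..t, g (t - s) := by
    apply intervalIntegral.integral_congr_ae
    filter_upwards [hne] with s hsne hs
    rw [Set.uIoc_of_le ht.le] at hs
    have hs0 : 0 < s := hs.1
    have hst : s < t := lt_of_le_of_ne hs.2 hsne
    have inner1 : (∫ w in (0:ℝ)..s,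
          (t - s) ^ (α - 1) * (t - w) ^ (α - 1) * (N * w / t + N * (N - 1) * w * s / t ^ 2))
        = ∫ w in (0:ℝ)..s,
            ((t - s) ^ (α - 1) * (N / t + N * (N - 1) * s / t ^ 2)) * ((t - w) ^ (α - 1) * w) :=
      intervalIntegral.integral_congr (fun w _ => by ring)
    have hcoef : N / t + N * (N - 1) * s / t ^ 2 = K - B * (t - s) := by
      rw [hK, hB]; field_simp; ring
    rw [inner1, intervalIntegral.integral_const_mul, aux_inner α t hα s hs0.le hst, hg]
    simp only
    rw [hcoef, hC, hD, hE]
    ring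
  rw [step1, intervalIntegral.integral_comp_sub_left g t, sub_zero, sub_self]
  -- Step 2 : expand g into monomials a.e. on (0, t]
  have step2 : (∫ u in (0:ℝ)..t, g u)
      = ∫ u in (0:ℝ)..t, ((K * C) * u ^ (α - 1) + (-(B * C)) * u ^ α
          + (-(K * D)) * u ^ (2*α - 1) + (K * E + B * D) * u ^ (2*α)
          + (-(B * E)) * u ^ (2*α + 1)) := by
    apply intervalIntegral.integral_congr_ae
    filter_upwards [] with u hu
    rw [Set.uIoc_of_le ht.le] at hu
    have hu0 : 0 < u := hu.1
    rw [hg]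
    simp only
    rw [show 2*α - 1 = (α - 1) + α by ring, Real.rpow_add hu0 (α-1) α,
        show 2*α + 1 = α + (α + 1) by ring, Real.rpow_add hu0 α (α+1),
        show 2*α = (α - 1) + (α + 1) by ring, Real.rpow_add hu0 (α-1) (α+1)]
    have hA : u ^ (α + 1) = u ^ α * u := Real.rpow_add_one hu0.ne' α
    have hBq : u ^ α = u ^ (α - 1) * u := by
      rw [← Real.rpow_add_one hu0.ne' (α - 1)]; ring_nf
    rw [hA, hBq]
    ring
  rw [step2, aux_outer α t hα]
  -- Step 3 : final algebra with Gamma recurrences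
  have hG2 : Real.Gamma (2*α + 2) = (2*α + 1) * (2*α) * Real.Gamma (2*α) := by
    rw [show 2*α + 2 = (2*α + 1) + 1 by ring, Real.Gamma_add_one (by positivity),
        show 2*α + 1 = (2*α) + 1 by ring, Real.Gamma_add_one (by positivity)]
    ring
  have hG1 : Real.Gamma (α + 2) = (α + 1) * α * Real.Gamma α := by
    rw [show α + 2 = (α + 1) + 1 by ring, Real.Gamma_add_one (by positivity),
        Real.Gamma_add_one hα.ne']
    ring
  have ht1 : t ^ (α + 1) = t ^ α * t := Real.rpow_add_one ht.ne' α
  have ht2 : t ^ (2*α) = t ^ α * t ^ α := by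
    rw [two_mul, Real.rpow_add ht]
  have ht3 : t ^ (2*α + 1) = t ^ α * t ^ α * t := by
    rw [Real.rpow_add_one ht.ne' (2*α), ht2]
  have ht4 : t ^ (2*α + 2) = t ^ α * t ^ α * t * t := by
    rw [show 2*α + 2 = (2*α + 1) + 1 by ring, Real.rpow_add_one ht.ne' (2*α+1), ht3]
  rw [hG2, hG1, hK, hB, hC, hD, hE, ht1, ht2, ht3, ht4]
  have htα : 0 < t ^ α := Real.rpow_pos_of_pos ht α
  field_simp
  ring
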